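/- Let ρ(x) = x². Let K ⊆ ℝⁿ be compact. Then the set of functions K → ℝᵐ computable by feedforward neural networks of arbitrary depth and width n + m + 1 with activation ρ in each hidden neuron is dense in C(K; ℝᵐ) with respect to the uniform norm. -/

import Mathlib

/-- Apply a list of hidden layers: each layer is an affine map followed by
componentwise application of the activation `ρ`. -/
noncomputable def applyLayers (ρ : ℝ → ℝ) (w : ℕ) :
    List ((Fin w → ℝ) →ᵃ[ℝ] (Fin w → ℝ)) → (Fin w → ℝ) → (Fin w → ℝ)
  | [], v => v
  | A :: rest, v => applyLayers ρ w rest (fun i => ρ (A v i))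

/-- `IsNetworkFun ρ n m w f` means `f : ℝⁿ → ℝᵐ` is computed by a feedforward
network of arbitrary depth and width `w`: an affine map `A₀ : ℝⁿ → ℝʷ` followed by
`ρ` componentwise, then finitely many hidden layers (affine map `ℝʷ → ℝʷ` followed by
`ρ` componentwise), then an affine output map `ℝʷ → ℝᵐ`. -/
def IsNetworkFun (ρ : ℝ → ℝ) (n m w : ℕ) (f : (Fin n → ℝ) → (Fin m → ℝ)) : Prop :=
  ∃ (A₀ : (Fin n → ℝ) →ᵃ[ℝ] (Fin w → ℝ))
    (hidden : List ((Fin w → ℝ) →ᵃ[ℝ] (Fin w → ℝ)))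
    (Aout : (Fin w → ℝ) →ᵃ[ℝ] (Fin m → ℝ)),
    ∀ x, f x = Aout (applyLayers ρ w hidden (fun i => ρ (A₀ x i)))

open Finset

set_option maxHeartbeats 1000000

noncomputable section NetAux

lemma applyLayers_append (ρ : ℝ → ℝ) (w : ℕ) (l₁ l₂ : List ((Fin w → ℝ) →ᵃ[ℝ] (Fin w → ℝ)))
    (v : Fin w → ℝ) :
    applyLayers ρ w (l₁ ++ l₂) v = applyLayers ρ w l₂ (applyLayers ρ w l₁ v) := by
  induction l₁ generalizing v with
  | nil => simp [applyLayers]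
  | cons A rest ih => simp [applyLayers, ih]

def sqf : ℝ → ℝ := fun t => t ^ 2


def affOfLin {a b : ℕ} (L : (Fin a → ℝ) →ₗ[ℝ] (Fin b → ℝ)) (c : Fin b → ℝ) :
    (Fin a → ℝ) →ᵃ[ℝ] (Fin b → ℝ) where
  toFun := fun v => L v + c
  linear := L
  map_vadd' := by
    intro p v
    simp only [vadd_eq_add, map_add]
    abel

@[simp] lemma affOfLin_apply {a b : ℕ} (L : (Fin a → ℝ) →ₗ[ℝ] (Fin b → ℝ)) (c : Fin b → ℝ)
    (v : Fin a → ℝ) : affOfLin L c v = L v + c := rfl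

/-- the affine "encoding" layer: identity on squaring registers, `y ↦ y/(2λ) + 1/2` elsewhere. -/
def scaleAff (w : ℕ) (sqr : Fin w → Bool) (lam : ℝ) : (Fin w → ℝ) →ᵃ[ℝ] (Fin w → ℝ) :=
  affOfLin (LinearMap.pi (fun i => if sqr i then LinearMap.proj i
      else (2*lam)⁻¹ • LinearMap.proj i)) (fun i => if sqr i then 0 else 1/2)

lemma scaleAff_apply (w : ℕ) (sqr : Fin w → Bool) (lam : ℝ) (v : Fin w → ℝ) (i : Fin w) :
    scaleAff w sqr lam v i = if sqr i then v i else (2*lam)⁻¹ * v i + 1/2 := by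
  by_cases h : sqr i <;>
    simp [scaleAff, LinearMap.pi_apply, h]

/-- the affine "decoding" map: identity on squaring registers, `u ↦ 2λu − λ/2` elsewhere. -/
def decodeAff (w : ℕ) (sqr : Fin w → Bool) (lam : ℝ) : (Fin w → ℝ) →ᵃ[ℝ] (Fin w → ℝ) :=
  affOfLin (LinearMap.pi (fun i => if sqr i then LinearMap.proj i
      else (2*lam) • LinearMap.proj i)) (fun i => if sqr i then 0 else -(lam/2))

lemma decodeAff_apply (w : ℕ) (sqr : Fin w → Bool) (lam : ℝ) (v : Fin w → ℝ) (i : Fin w) :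
    decodeAff w sqr lam v i = if sqr i then v i else 2*lam * v i - lam/2 := by
  by_cases h : sqr i <;>
    simp [decodeAff, LinearMap.pi_apply, h, sub_eq_add_neg]

def Realizable (n m : ℕ) (K : Set (Fin n → ℝ)) (F : (Fin n → ℝ) → (Fin (n+m+1) → ℝ)) : Prop :=
  Continuous F ∧ ∀ ε > 0, ∃ (A₀ : (Fin n → ℝ) →ᵃ[ℝ] (Fin (n+m+1) → ℝ))
    (hidden : List ((Fin (n+m+1) → ℝ) →ᵃ[ℝ] (Fin (n+m+1) → ℝ)))
    (D : (Fin (n+m+1) → ℝ) →ᵃ[ℝ] (Fin (n+m+1) → ℝ)),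
    ∀ x ∈ K, ‖D (applyLayers sqf (n+m+1) hidden (fun i => sqf (A₀ x i))) - F x‖ ≤ ε

lemma Realizable.step {n m : ℕ} {K : Set (Fin n → ℝ)} (hK : IsCompact K)
    {F : (Fin n → ℝ) → (Fin (n+m+1) → ℝ)} (hF : Realizable n m K F)
    (Ψ : (Fin (n+m+1) → ℝ) →ᵃ[ℝ] (Fin (n+m+1) → ℝ)) (sqr : Fin (n+m+1) → Bool) :
    Realizable n m K (fun x i => if sqr i then (Ψ (F x) i)^2 else Ψ (F x) i) := by
  obtain ⟨hcont, happ⟩ := hF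
  have hΨc : Continuous Ψ := Ψ.continuous_of_finiteDimensional
  constructor
  · apply continuous_pi
    intro i
    by_cases h : sqr i = true
    · simp only [h, if_true]
      exact ((continuous_apply i).comp (hΨc.comp hcont)).pow 2
    · simp only [h, if_false]
      exact (continuous_apply i).comp (hΨc.comp hcont)
  intro ε hε
  set Lc := LinearMap.toContinuousLinearMap Ψ.linear with hLc
  set C : ℝ := ‖Lc‖ + 1 with hC
  have hC1 : (1:ℝ) ≤ C := by have := norm_nonneg Lc; linarith
  have hC0 : (0:ℝ) < C := lt_of_lt_of_le one_pos hC1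
  have hlip : ∀ u v : Fin (n+m+1) → ℝ, ‖Ψ u - Ψ v‖ ≤ C * ‖u - v‖ := by
    intro u v
    have h1 : Ψ u - Ψ v = Ψ.linear (u - v) := (Ψ.linearMap_vsub u v).symm
    rw [h1]
    have h2 : ‖Lc (u - v)‖ ≤ ‖Lc‖ * ‖u - v‖ := Lc.le_opNorm _
    have h3 : Lc (u - v) = Ψ.linear (u - v) := rfl
    rw [h3] at h2
    refine h2.trans ?_
    have h4 : (0:ℝ) ≤ ‖u - v‖ := norm_nonneg _
    nlinarith [norm_nonneg Lc]
  obtain ⟨R₀, hR₀⟩ := hK.exists_bound_of_continuousOn ((hΨc.comp hcont).continuousOn)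
  set R : ℝ := max R₀ 1 with hR
  have hR1 : (1:ℝ) ≤ R := le_max_right _ _
  have hRb : ∀ x ∈ K, ‖Ψ (F x)‖ ≤ R := fun x hx => (hR₀ x hx).trans (le_max_left _ _)
  set δ : ℝ := min (1/C) (ε/((2*R+2)*C)) with hδ
  have hδ0 : 0 < δ := by
    apply lt_min
    · positivity
    · apply div_pos hε; positivity
  set lam : ℝ := (R+1)^2/ε with hlam
  have hlam0 : 0 < lam := by positivity
  obtain ⟨A₀, hidden, D, hD⟩ := happ δ hδ0
  classical
  refine ⟨A₀, hidden ++ [(scaleAff (n+m+1) sqr lam).comp (Ψ.comp D)],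
    decodeAff (n+m+1) sqr lam, ?_⟩
  intro x hx
  rw [applyLayers_append]
  set u := applyLayers sqf (n+m+1) hidden (fun i => sqf (A₀ x i)) with hu
  have hDu : ‖D u - F x‖ ≤ δ := hD x hx
  set e := Ψ (D u) with he
  have hee : ‖e - Ψ (F x)‖ ≤ C * δ := (hlip _ _).trans (by
    have := mul_le_mul_of_nonneg_left hDu (le_of_lt hC0); linarith)
  have hCδ1 : C * δ ≤ 1 := by
    have h : δ ≤ 1/C := min_le_left _ _
    calc C * δ ≤ C * (1/C) := by nlinarith
    _ = 1 := by field_simp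
  have hCδ2 : C * δ ≤ ε/(2*R+2) := by
    have h1 : δ ≤ ε/((2*R+2)*C) := min_le_right _ _
    calc C * δ ≤ C * (ε/((2*R+2)*C)) := by nlinarith
    _ = ε/(2*R+2) := by field_simp
  rw [pi_norm_le_iff_of_nonneg (le_of_lt hε)]
  intro i
  have hei : |e i - Ψ (F x) i| ≤ C * δ := by
    have h := norm_le_pi_norm (e - Ψ (F x)) i
    simp only [Pi.sub_apply, Real.norm_eq_abs] at h
    exact h.trans hee
  have hbi : |Ψ (F x) i| ≤ R := by
    have h := norm_le_pi_norm (Ψ (F x)) i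
    simp only [Real.norm_eq_abs] at h
    exact h.trans (hRb x hx)
  have hstate : applyLayers sqf (n+m+1) [(scaleAff (n+m+1) sqr lam).comp (Ψ.comp D)] u
      = fun j => (scaleAff (n+m+1) sqr lam e j)^2 := by
    funext j
    simp only [applyLayers, AffineMap.comp_apply, sqf, he]
  rw [hstate, Real.norm_eq_abs, Pi.sub_apply, decodeAff_apply]
  beta_reduce
  by_cases hsq : sqr i = true
  · rw [if_pos hsq, if_pos hsq, scaleAff_apply, if_pos hsq]
    have h1 : |e i| ≤ R + 1 := by
      have := abs_sub_abs_le_abs_sub (e i) (Ψ (F x) i)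
      linarith
    have habs : |(e i)^2 - (Ψ (F x) i)^2| ≤ C * δ * (2*R+1) := by
      have key : (e i)^2 - (Ψ (F x) i)^2 = (e i - Ψ (F x) i) * (e i + Ψ (F x) i) := by ring
      rw [key, abs_mul]
      have h2 : |e i + Ψ (F x) i| ≤ 2*R + 1 := by
        calc |e i + Ψ (F x) i| ≤ |e i| + |Ψ (F x) i| := abs_add_le _ _
        _ ≤ 2*R + 1 := by linarith
      have h4 : (0:ℝ) ≤ |e i - Ψ (F x) i| := abs_nonneg _
      nlinarith
    refine habs.trans ?_
    have h5 : C * δ * (2*R+1) ≤ (ε/(2*R+2)) * (2*R+1) := by nlinarith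
    refine h5.trans ?_
    rw [div_mul_eq_mul_div, div_le_iff₀ (by linarith)]
    nlinarith
  · rw [if_neg hsq, if_neg hsq, scaleAff_apply, if_neg hsq]
    have hdec : 2*lam * ((2*lam)⁻¹ * e i + 1/2)^2 - lam/2 = e i + (e i)^2/(2*lam) := by
      field_simp
      ring
    rw [hdec]
    have h1 : |e i| ≤ R + 1 := by
      have := abs_sub_abs_le_abs_sub (e i) (Ψ (F x) i)
      linarith
    have h2 : |e i + (e i)^2/(2*lam) - Ψ (F x) i| ≤ |e i - Ψ (F x) i| + (e i)^2/(2*lam) := by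
      have h3 : |(e i)^2/(2*lam)| = (e i)^2/(2*lam) := by
        rw [abs_of_nonneg]; positivity
      calc |e i + (e i)^2/(2*lam) - Ψ (F x) i|
          = |(e i - Ψ (F x) i) + (e i)^2/(2*lam)| := by ring_nf
        _ ≤ |e i - Ψ (F x) i| + |(e i)^2/(2*lam)| := abs_add_le _ _
        _ = |e i - Ψ (F x) i| + (e i)^2/(2*lam) := by rw [h3]
    refine h2.trans ?_
    have h6 : (e i)^2 ≤ (R+1)^2 := by nlinarith [sq_abs (e i), abs_nonneg (e i)]
    have h5 : (e i)^2/(2*lam) ≤ ε/2 := by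
      have h7 : (e i)^2/(2*lam) ≤ (R+1)^2/(2*lam) := by gcongr
      refine h7.trans ?_
      have h9 : (R+1)^2/(2*lam) = ε/2 := by
        rw [hlam]; field_simp
      rw [h9]
    have h8 : C * δ ≤ ε/2 := by
      refine hCδ2.trans ?_
      rw [div_le_div_iff₀ (by linarith) (by norm_num)]
      nlinarith
    exact le_trans (add_le_add hei h5) (by linarith [h8])

section Chunk2

variable {n m : ℕ} {K : Set (Fin n → ℝ)}

def inI (n m : ℕ) (i : Fin n) : Fin (n+m+1) := ⟨i, by omega⟩
def accI (n m : ℕ) (j : Fin m) : Fin (n+m+1) := ⟨n+j, by omega⟩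
def scrI (n m : ℕ) : Fin (n+m+1) := ⟨n+m, by omega⟩

/-- the ideal register state: inputs, then accumulators `h`, then scratch `s`. -/
def St (n m : ℕ) (h : Fin m → (Fin n → ℝ) → ℝ) (s : (Fin n → ℝ) → ℝ) :
    (Fin n → ℝ) → Fin (n+m+1) → ℝ :=
  fun x i => if hn : (i:ℕ) < n then x ⟨i, hn⟩
    else if _ : (i:ℕ) < n + m then h ⟨(i:ℕ) - n, by omega⟩ x else s x

lemma St_inI (h : Fin m → (Fin n → ℝ) → ℝ) (s : (Fin n → ℝ) → ℝ) (x : Fin n → ℝ) (i : Fin n) :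
    St n m h s x (inI n m i) = x i := by
  simp [St, inI]

lemma St_accI (h : Fin m → (Fin n → ℝ) → ℝ) (s : (Fin n → ℝ) → ℝ) (x : Fin n → ℝ) (j : Fin m) :
    St n m h s x (accI n m j) = h j x := by
  have hval : ((accI n m j : Fin (n+m+1)) : ℕ) = n + j := rfl
  rw [St, dif_neg (by omega), dif_pos (by omega)]
  congr 1
  ext
  simp [hval]

lemma St_scrI (h : Fin m → (Fin n → ℝ) → ℝ) (s : (Fin n → ℝ) → ℝ) (x : Fin n → ℝ) :
    St n m h s x (scrI n m) = s x := by
  have hval : ((scrI n m : Fin (n+m+1)) : ℕ) = n + m := rfl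
  rw [St, dif_neg (by omega), dif_neg (by omega)]

lemma mkAff_apply {a b : ℕ} (rows : Fin b → ((Fin a → ℝ) →ₗ[ℝ] ℝ)) (cv : Fin b → ℝ)
    (v : Fin a → ℝ) (i : Fin b) :
    affOfLin (LinearMap.pi rows) cv v i = rows i v + cv i := by
  simp [LinearMap.pi_apply]

/-- the base state: inputs loaded, all other registers zero. -/
lemma realizable_base (hK : IsCompact K) :
    Realizable n m K (St n m (fun _ _ => 0) (fun _ => 0)) := by
  have hSt : St n m (fun _ _ => 0) (fun _ => 0)
      = fun (x : Fin n → ℝ) (i : Fin (n+m+1)) => if hn : (i:ℕ) < n then x ⟨i, hn⟩ else 0 := by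
    funext x i
    rw [St]
    by_cases hn : (i:ℕ) < n
    · rw [dif_pos hn, dif_pos hn]
    · rw [dif_neg hn, dif_neg hn]
      by_cases hm : (i:ℕ) < n + m
      · rw [dif_pos hm]
      · rw [dif_neg hm]
  rw [hSt]
  constructor
  · apply continuous_pi
    intro i
    by_cases hn : (i:ℕ) < n
    · simp only [dif_pos hn]; exact continuous_apply _
    · simp only [dif_neg hn]; exact continuous_const
  intro ε hε
  obtain ⟨R₀, hR₀⟩ := hK.exists_bound_of_continuousOn continuousOn_id
  set R : ℝ := max R₀ 1 with hR
  have hR1 : (1:ℝ) ≤ R := le_max_right _ _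
  have hRb : ∀ x ∈ K, ‖x‖ ≤ R := fun x hx => (hR₀ x hx).trans (le_max_left _ _)
  set lam : ℝ := (R+1)^2/ε with hlam
  have hlam0 : 0 < lam := by positivity
  classical
  refine ⟨affOfLin (LinearMap.pi (fun i => if hn : (i:ℕ) < n
      then (2*lam)⁻¹ • LinearMap.proj (⟨i, hn⟩ : Fin n) else 0))
      (fun i => if (i:ℕ) < n then 1/2 else 0), [],
    affOfLin (LinearMap.pi (fun i => if (i:ℕ) < n
      then (2*lam) • LinearMap.proj i else 0))
      (fun i => if (i:ℕ) < n then -(lam/2) else 0), ?_⟩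
  intro x hx
  rw [pi_norm_le_iff_of_nonneg (le_of_lt hε)]
  intro i
  simp only [applyLayers]
  rw [Pi.sub_apply, mkAff_apply]
  by_cases hn : (i:ℕ) < n
  · rw [if_pos hn, if_pos hn, dif_pos hn]
    have hxi : |x ⟨i, hn⟩| ≤ R := by
      have := norm_le_pi_norm x ⟨i, hn⟩
      rw [Real.norm_eq_abs] at this
      exact this.trans (hRb x hx)
    set t := x ⟨i, hn⟩ with ht
    have hstate_i : sqf (affOfLin (LinearMap.pi (fun i => if hn : (i:ℕ) < n
          then (2*lam)⁻¹ • LinearMap.proj (⟨i, hn⟩ : Fin n) else 0))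
          (fun i => if (i:ℕ) < n then 1/2 else 0) x i)
        = ((2*lam)⁻¹ * t + 1/2)^2 := by
      rw [mkAff_apply, dif_pos hn, if_pos hn, sqf]
      simp [ht]
    simp only [LinearMap.smul_apply, LinearMap.proj_apply, smul_eq_mul]
    rw [hstate_i]
    have hdec : 2*lam * ((2*lam)⁻¹ * t + 1/2)^2 + -(lam/2) - t = t^2/(2*lam) := by
      field_simp
      ring
    rw [Real.norm_eq_abs, hdec, abs_of_nonneg (by positivity)]
    have h6 : t^2 ≤ (R+1)^2 := by nlinarith [sq_abs t, abs_nonneg t]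
    have h7 : t^2/(2*lam) ≤ (R+1)^2/(2*lam) := by gcongr
    refine h7.trans ?_
    have h9 : (R+1)^2/(2*lam) = ε/2 := by rw [hlam]; field_simp
    rw [h9]
    linarith
  · rw [if_neg hn, if_neg hn, dif_neg hn]
    simp only [LinearMap.zero_apply, Real.norm_eq_abs]
    norm_num
    linarith

end Chunk2

section Chunk3

variable {n m : ℕ} {K : Set (Fin n → ℝ)}

open Finset


lemma St_low {n m : ℕ} (h : Fin m → (Fin n → ℝ) → ℝ) (s s' : (Fin n → ℝ) → ℝ)
    (x : Fin n → ℝ) (i : Fin (n+m+1)) (hnm : (i:ℕ) < n + m) :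
    St n m h s x i = St n m h s' x i := by
  simp only [St]
  by_cases hn : (i:ℕ) < n
  · rw [dif_pos hn, dif_pos hn]
  · rw [dif_neg hn, dif_neg hn, dif_pos hnm, dif_pos hnm]

/-- load an affine function of the inputs into the scratch register -/
lemma Realizable.scratch_affine (hK : IsCompact K) {h : Fin m → (Fin n → ℝ) → ℝ}
    {s : (Fin n → ℝ) → ℝ} (hr : Realizable n m K (St n m h s))
    (a : Fin n → ℝ) (c : ℝ) :
    Realizable n m K (St n m h (fun x => c + ∑ i, a i * x i)) := by
  classical
  have key := hr.step hK (affOfLin (LinearMap.pi (fun i => if (i:ℕ) < n + m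
      then LinearMap.proj i else ∑ k : Fin n, a k • LinearMap.proj (inI n m k)))
      (fun i => if (i:ℕ) < n + m then 0 else c)) (fun _ => false)
  have heq : (fun (x : Fin n → ℝ) (i : Fin (n+m+1)) => if (false : Bool) = true
      then (affOfLin (LinearMap.pi (fun i => if (i:ℕ) < n + m
        then LinearMap.proj i else ∑ k : Fin n, a k • LinearMap.proj (inI n m k)))
        (fun i => if (i:ℕ) < n + m then 0 else c) (St n m h s x) i)^2
      else affOfLin (LinearMap.pi (fun i => if (i:ℕ) < n + m
        then LinearMap.proj i else ∑ k : Fin n, a k • LinearMap.proj (inI n m k)))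
        (fun i => if (i:ℕ) < n + m then 0 else c) (St n m h s x) i)
      = St n m h (fun x => c + ∑ i, a i * x i) := by
    funext x i
    simp only [Bool.false_eq_true, if_false]
    rw [mkAff_apply]
    by_cases hnm : (i:ℕ) < n + m
    · rw [if_pos hnm, if_pos hnm, add_zero]
      simp only [LinearMap.proj_apply]
      exact St_low h s _ x i hnm
    · rw [if_neg hnm, if_neg hnm]
      have hsum : (∑ k : Fin n, a k • LinearMap.proj (R := ℝ)
          (φ := fun _ : Fin (n+m+1) => ℝ) (inI n m k)) (St n m h s x)
          = ∑ k : Fin n, a k * x k := by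
        rw [LinearMap.coe_sum, Finset.sum_apply]
        refine Finset.sum_congr rfl (fun k _ => ?_)
        simp only [LinearMap.smul_apply, LinearMap.proj_apply, smul_eq_mul]
        rw [St_inI]
      rw [hsum]
      have : (i:ℕ) = n + m := by omega
      have hi : i = scrI n m := by
        ext; exact this
      rw [hi, St_scrI]
      ring
  rw [heq] at key
  exact key

/-- square the scratch register -/
lemma Realizable.scratch_square (hK : IsCompact K) {h : Fin m → (Fin n → ℝ) → ℝ}
    {s : (Fin n → ℝ) → ℝ} (hr : Realizable n m K (St n m h s)) :
    Realizable n m K (St n m h (fun x => (s x)^2)) := by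
  classical
  have key := hr.step hK (AffineMap.id ℝ (Fin (n+m+1) → ℝ))
      (fun i => decide ((i:ℕ) = n + m))
  have heq : (fun (x : Fin n → ℝ) (i : Fin (n+m+1)) => if (decide ((i:ℕ) = n + m)) = true
      then (AffineMap.id ℝ (Fin (n+m+1) → ℝ) (St n m h s x) i)^2
      else AffineMap.id ℝ (Fin (n+m+1) → ℝ) (St n m h s x) i)
      = St n m h (fun x => (s x)^2) := by
    funext x i
    simp only [AffineMap.id_apply, decide_eq_true_eq]
    by_cases hs : (i:ℕ) = n + m
    · rw [if_pos hs]
      have hi : i = scrI n m := by ext; exact hs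
      rw [hi, St_scrI, St_scrI]
    · rw [if_neg hs]
      exact St_low h s _ x i (by omega)
  rw [heq] at key
  exact key

/-- add `c * scratch` to accumulator `j` -/
lemma Realizable.acc_add (hK : IsCompact K) {h : Fin m → (Fin n → ℝ) → ℝ}
    {s : (Fin n → ℝ) → ℝ} (hr : Realizable n m K (St n m h s)) (j : Fin m) (c : ℝ) :
    Realizable n m K (St n m (Function.update h j (fun x => h j x + c * s x)) s) := by
  classical
  have key := hr.step hK (affOfLin (LinearMap.pi (fun i => if (i:ℕ) = n + (j:ℕ)
      then LinearMap.proj i + c • LinearMap.proj (scrI n m) else LinearMap.proj i))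
      (fun _ => 0)) (fun _ => false)
  have heq : (fun (x : Fin n → ℝ) (i : Fin (n+m+1)) => if (false : Bool) = true
      then (affOfLin (LinearMap.pi (fun i => if (i:ℕ) = n + (j:ℕ)
        then LinearMap.proj i + c • LinearMap.proj (scrI n m) else LinearMap.proj i))
        (fun _ => 0) (St n m h s x) i)^2
      else affOfLin (LinearMap.pi (fun i => if (i:ℕ) = n + (j:ℕ)
        then LinearMap.proj i + c • LinearMap.proj (scrI n m) else LinearMap.proj i))
        (fun _ => 0) (St n m h s x) i)
      = St n m (Function.update h j (fun x => h j x + c * s x)) s := by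
    funext x i
    simp only [Bool.false_eq_true, if_false]
    rw [mkAff_apply, add_zero]
    by_cases hj : (i:ℕ) = n + (j:ℕ)
    · rw [if_pos hj]
      have hi : i = accI n m j := by ext; exact hj
      simp only [LinearMap.add_apply, LinearMap.proj_apply, LinearMap.smul_apply, smul_eq_mul]
      rw [hi, St_accI, St_scrI, St_accI, Function.update_self]
    · rw [if_neg hj]
      simp only [LinearMap.proj_apply]
      simp only [St]
      by_cases hn : (i:ℕ) < n
      · rw [dif_pos hn, dif_pos hn]
      · rw [dif_neg hn, dif_neg hn]
        by_cases hm' : (i:ℕ) < n + m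
        · rw [dif_pos hm', dif_pos hm']
          have hne : (⟨(i:ℕ) - n, by omega⟩ : Fin m) ≠ j := by
            intro hcon
            apply hj
            have hval := congrArg Fin.val hcon
            simp only [] at hval
            omega
          rw [Function.update_of_ne hne]
        · rw [dif_neg hm', dif_neg hm']
  rw [heq] at key
  exact key

/-- load the `2^r`-th power of an affine function of inputs into the scratch -/
lemma Realizable.scratch_pow (hK : IsCompact K) {h : Fin m → (Fin n → ℝ) → ℝ}
    {s : (Fin n → ℝ) → ℝ} (hr : Realizable n m K (St n m h s))
    (a : Fin n → ℝ) (c : ℝ) (r : ℕ) :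
    Realizable n m K (St n m h (fun x => (c + ∑ i, a i * x i)^(2^r))) := by
  induction r with
  | zero =>
    have := hr.scratch_affine hK a c
    have heq : (fun x : Fin n → ℝ => c + ∑ i, a i * x i)
        = fun x => (c + ∑ i, a i * x i)^(2^0) := by
      funext x; rw [pow_zero, pow_one]
    rw [← heq]
    exact this
  | succ r ih =>
    have := ih.scratch_square hK
    have heq : (fun x : Fin n → ℝ => ((c + ∑ i, a i * x i)^(2^r))^2)
        = fun x => (c + ∑ i, a i * x i)^(2^(r+1)) := by
      funext x
      rw [← pow_mul, pow_succ]
    rw [heq] at this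
    exact this

/-- `Reach h` : a network state with accumulators `h` is realizable. -/
def Reach (n m : ℕ) (K : Set (Fin n → ℝ)) (h : Fin m → (Fin n → ℝ) → ℝ) : Prop :=
  ∃ s, Realizable n m K (St n m h s)

lemma reach_zero (hK : IsCompact K) : Reach n m K (fun _ _ => 0) :=
  ⟨fun _ => 0, realizable_base hK⟩

lemma reach_add_gen (hK : IsCompact K) {h : Fin m → (Fin n → ℝ) → ℝ}
    (hr : Reach n m K h) (j : Fin m) (c : ℝ) (a : Fin n → ℝ) (c₀ : ℝ) (r : ℕ) :
    Reach n m K (Function.update h j (fun x => h j x + c * (c₀ + ∑ i, a i * x i)^(2^r))) := by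
  obtain ⟨s, hs⟩ := hr
  exact ⟨_, (hs.scratch_pow hK a c₀ r).acc_add hK j c⟩

end Chunk3

section Chunk4

open Finset

variable {n m : ℕ} {K : Set (Fin n → ℝ)}

/-- generators: powers (with exponent a power of two) of affine functions of the inputs. -/
def gens (n : ℕ) : Set ((Fin n → ℝ) → ℝ) :=
  {g | ∃ (a : Fin n → ℝ) (c : ℝ) (r : ℕ), g = fun x => (c + ∑ i, a i * x i)^(2^r)}

lemma reach_add_sum (hK : IsCompact K) {h : Fin m → (Fin n → ℝ) → ℝ} (j : Fin m)
    (T : Finset ((Fin n → ℝ) → ℝ)) (co : ((Fin n → ℝ) → ℝ) → ℝ)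
    (hT : ∀ v ∈ T, v ∈ gens n) (hr : Reach n m K h) :
    Reach n m K (Function.update h j (fun x => h j x + ∑ v ∈ T, co v * v x)) := by
  classical
  induction T using Finset.induction_on with
  | empty =>
    have heq : (fun x => h j x + ∑ v ∈ (∅ : Finset ((Fin n → ℝ) → ℝ)), co v * v x) = h j := by
      funext x; simp
    rw [heq, Function.update_eq_self]
    exact hr
  | @insert g T hg IH =>
    obtain ⟨av, ac, r, hgen⟩ := hT g (mem_insert_self _ _)
    have IH' := IH (fun v hv => hT v (mem_insert_of_mem hv))
    have h1 := reach_add_gen hK IH' j (co g) av ac r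
    have heq : Function.update
        (Function.update h j (fun x => h j x + ∑ v ∈ T, co v * v x)) j
        (fun x => Function.update h j (fun x => h j x + ∑ v ∈ T, co v * v x) j x
          + co g * (ac + ∑ i, av i * x i)^(2^r))
        = Function.update h j (fun x => h j x + ∑ v ∈ insert g T, co v * v x) := by
      have harg : (fun x => Function.update h j (fun x => h j x + ∑ v ∈ T, co v * v x) j x
          + co g * (ac + ∑ i, av i * x i)^(2^r))
          = (fun x => h j x + ∑ v ∈ insert g T, co v * v x) := by
        funext x
        have hgx : g x = (ac + ∑ i, av i * x i)^(2^r) := by rw [hgen]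
        rw [Function.update_self, Finset.sum_insert hg, hgx]
        ring
      rw [Function.update_idem, harg]
    rw [heq] at h1
    exact h1

lemma reach_add_span (hK : IsCompact K) {h : Fin m → (Fin n → ℝ) → ℝ} (j : Fin m)
    (g : (Fin n → ℝ) → ℝ) (hg : g ∈ Submodule.span ℝ (gens n)) (hr : Reach n m K h) :
    Reach n m K (Function.update h j (fun x => h j x + g x)) := by
  classical
  rw [Submodule.mem_span_set] at hg
  obtain ⟨cf, hsupp, hsum⟩ := hg
  have h1 := reach_add_sum hK j cf.support (fun v => cf v) (fun v hv => hsupp hv) hr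
  have heq : (fun x => h j x + ∑ v ∈ cf.support, cf v * v x) = fun x => h j x + g x := by
    funext x
    congr 1
    rw [← hsum, Finsupp.sum]
    rw [Finset.sum_apply]
    refine Finset.sum_congr rfl (fun v _ => ?_)
    simp [smul_eq_mul]
  rw [heq] at h1
  exact h1

lemma reach_P (hK : IsCompact K) (P : Fin m → (Fin n → ℝ) → ℝ)
    (hP : ∀ j, P j ∈ Submodule.span ℝ (gens n)) : Reach n m K P := by
  classical
  have main : ∀ T : Finset (Fin m), Reach n m K (fun j => if j ∈ T then P j else 0) := by
    intro T
    induction T using Finset.induction_on with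
    | empty =>
      have : (fun j : Fin m => if j ∈ (∅ : Finset (Fin m)) then P j else 0)
          = (fun (_ : Fin m) (_ : Fin n → ℝ) => (0:ℝ)) := by
        funext j; simp; rfl
      rw [this]
      exact reach_zero hK
    | @insert j T hj IH =>
      set prev := fun j' : Fin m => if j' ∈ T then P j' else 0 with hprev
      have h1 := reach_add_span hK j (P j) (hP j) IH
      have heq : Function.update prev j (fun x => prev j x + P j x)
          = fun j' => if j' ∈ insert j T then P j' else 0 := by
        funext j'
        by_cases hj' : j' = j
        · subst hj'
          rw [Function.update_self]
          funext x
          rw [if_pos (mem_insert_self _ _)]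
          have : prev j' = 0 := by rw [hprev]; simp [hj]
          rw [this]
          simp
        · rw [Function.update_of_ne hj']
          rw [hprev]
          simp only []
          by_cases hT' : j' ∈ T
          · rw [if_pos hT', if_pos (mem_insert_of_mem hT')]
          · rw [if_neg hT', if_neg (by simp [hj', hT'])]
      rw [heq] at h1
      exact h1
  have := main Finset.univ
  have heq : (fun j : Fin m => if j ∈ Finset.univ then P j else 0) = P := by
    funext j; simp
  rw [heq] at this
  exact this

end Chunk4

section Chunk5

open Finset

/-- coefficients of a vector-valued polynomial lie in any submodule containing all its values -/
lemma coeff_mem_span {V : Type*} [AddCommGroup V] [Module ℝ V] (M : Submodule ℝ V) (d : ℕ)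
    (w : ℕ → V) (hw : ∀ t : ℝ, (∑ k ∈ Finset.range (d+1), t^k • w k) ∈ M) :
    ∀ k, k ≤ d → w k ∈ M := by
  intro k hk
  classical
  set A : Matrix (Fin (d+1)) (Fin (d+1)) ℝ := Matrix.vandermonde (fun i => (i:ℝ)) with hA
  have hdet : A.det ≠ 0 := by
    rw [hA, Matrix.det_vandermonde]
    apply Finset.prod_ne_zero_iff.2
    intro i _
    apply Finset.prod_ne_zero_iff.2
    intro j hj
    have hij : i < j := Finset.mem_Ioi.1 hj
    have hij' : (i:ℝ) < (j:ℝ) := by exact_mod_cast hij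
    exact sub_ne_zero.2 (ne_of_gt hij')
  have hinv : A⁻¹ * A = 1 := A.nonsing_inv_mul (isUnit_iff_ne_zero.2 hdet)
  set k' : Fin (d+1) := ⟨k, by omega⟩ with hk'
  have hrow : ∀ i : Fin (d+1), (∑ j : Fin (d+1), A i j • w (j:ℕ)) ∈ M := by
    intro i
    have h0 := hw ((i:ℕ) : ℝ)
    have heq : ∑ j : Fin (d+1), A i j • w (j:ℕ)
        = ∑ k ∈ Finset.range (d+1), (((i:ℕ):ℝ))^k • w k := by
      rw [← Fin.sum_univ_eq_sum_range (fun k => (((i:ℕ):ℝ))^k • w k) (d+1)]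
      exact Finset.sum_congr rfl (fun j _ => by rw [hA, Matrix.vandermonde_apply])
    rw [heq]
    exact h0
  have hkey : w k = ∑ i : Fin (d+1), (A⁻¹ k' i) • (∑ j : Fin (d+1), A i j • w (j:ℕ)) := by
    have h1 : ∀ i : Fin (d+1), (A⁻¹ k' i) • (∑ j : Fin (d+1), A i j • w (j:ℕ))
        = ∑ j : Fin (d+1), (A⁻¹ k' i * A i j) • w (j:ℕ) := by
      intro i
      rw [Finset.smul_sum]
      exact Finset.sum_congr rfl (fun j _ => by rw [smul_smul])
    rw [Finset.sum_congr rfl (fun i _ => h1 i), Finset.sum_comm]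
    have h2 : ∀ j : Fin (d+1), (∑ i : Fin (d+1), (A⁻¹ k' i * A i j) • w (j:ℕ))
        = ((A⁻¹ * A) k' j) • w (j:ℕ) := by
      intro j
      rw [← Finset.sum_smul, Matrix.mul_apply]
    rw [Finset.sum_congr rfl (fun j _ => h2 j), hinv]
    have h3 : ∀ j : Fin (d+1), ((1 : Matrix (Fin (d+1)) (Fin (d+1)) ℝ) k' j) • w (j:ℕ)
        = if k' = j then w (j:ℕ) else 0 := by
      intro j
      rw [Matrix.one_apply]
      by_cases h : k' = j
      · rw [if_pos h, if_pos h, one_smul]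
      · rw [if_neg h, if_neg h, zero_smul]
    rw [Finset.sum_congr rfl (fun j _ => h3 j), Finset.sum_ite_eq Finset.univ k' (fun j => w (j:ℕ))]
    rw [if_pos (Finset.mem_univ _)]
  rw [hkey]
  exact Submodule.sum_mem _ (fun i _ => Submodule.smul_mem _ _ (hrow i))

/-- every monomial function lies in the span of the generators -/
lemma monomial_mem_span_gens (n : ℕ) (α : Fin n → ℕ) :
    (fun x : Fin n → ℝ => ∏ i, x i ^ α i) ∈ Submodule.span ℝ (gens n) := by
  classical
  set d := ∑ i, α i with hd
  set N := 2^d with hN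
  have hdN : d ≤ N := (Nat.lt_two_pow_self (n := d)).le
  have main : ∀ j : ℕ, j ≤ n → ∀ α : Fin n → ℕ, (∀ i : Fin n, j ≤ (i:ℕ) → α i = 0) →
      (∑ i, α i) ≤ N → ∀ t : Fin n → ℝ,
      (fun x : Fin n → ℝ => (∏ i, x i ^ α i) *
        (1 + ∑ i ∈ Finset.univ.filter (fun i : Fin n => j ≤ (i:ℕ)), t i * x i) ^ (N - ∑ i, α i))
        ∈ Submodule.span ℝ (gens n) := by
    intro j
    induction j with
    | zero =>
      intro _ α hsupp _ t
      have hα : ∀ i, α i = 0 := fun i => hsupp i (Nat.zero_le _)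
      apply Submodule.subset_span
      refine ⟨fun i => if (0:ℕ) ≤ (i:ℕ) then t i else 0, 1, d, ?_⟩
      funext x
      have h1 : (∏ i, x i ^ α i) = 1 := by
        apply Finset.prod_eq_one
        intro i _
        rw [hα i, pow_zero]
      have h2 : (∑ i, α i) = 0 := Finset.sum_eq_zero (fun i _ => hα i)
      rw [h1, one_mul, h2, Nat.sub_zero]
      have h3 : Finset.univ.filter (fun i : Fin n => 0 ≤ (i:ℕ)) = Finset.univ :=
        Finset.filter_true_of_mem (fun i _ => Nat.zero_le _)
      rw [h3]
      congr 1
    | succ j IH =>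
      intro hj α hsupp hdeg t
      have hjn : j ≤ n := by omega
      have hjlt : j < n := by omega
      set j₀ : Fin n := ⟨j, hjlt⟩ with hj₀
      set α' := Function.update α j₀ 0 with hα'
      set k₀ := α j₀ with hk₀
      have hsupp' : ∀ i : Fin n, j ≤ (i:ℕ) → α' i = 0 := by
        intro i hi
        by_cases h : i = j₀
        · rw [hα', h, Function.update_self]
        · rw [hα', Function.update_of_ne h]
          apply hsupp
          have : (i:ℕ) ≠ j := fun hc => h (by ext; exact hc)
          omega
      have hd'd : (∑ i, α' i) + k₀ = ∑ i, α i := by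
        rw [hα']
        rw [← Finset.add_sum_erase Finset.univ α (Finset.mem_univ j₀)]
        rw [← Finset.add_sum_erase Finset.univ (Function.update α j₀ 0) (Finset.mem_univ j₀)]
        rw [Function.update_self]
        have : ∑ i ∈ Finset.univ.erase j₀, Function.update α j₀ 0 i
            = ∑ i ∈ Finset.univ.erase j₀, α i := by
          refine Finset.sum_congr rfl (fun i hi => ?_)
          rw [Function.update_of_ne (Finset.ne_of_mem_erase hi)]
        rw [this]
        omega
      set d' := ∑ i, α' i with hd'
      set M := N - d' with hM
      have hd'N : d' ≤ N := by omega
      have hk₀M : k₀ ≤ M := by omega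
      -- the ideal function with remainder sum over indices > j
      set A : (Fin n → ℝ) → ℝ :=
        fun x => 1 + ∑ i ∈ Finset.univ.filter (fun i : Fin n => j+1 ≤ (i:ℕ)), t i * x i with hA
      set w : ℕ → (Fin n → ℝ) → ℝ :=
        fun k => fun x => (∏ i, x i ^ α' i) * ((x j₀)^k * (A x)^(M-k) * (M.choose k : ℝ)) with hw
      have hvals : ∀ s : ℝ, (∑ k ∈ Finset.range (M+1), s^k • w k)
          ∈ Submodule.span ℝ (gens n) := by
        intro s
        have h0 := IH hjn α' hsupp' hd'N (Function.update t j₀ s)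
        have hsplit : ∀ x : Fin n → ℝ,
            (1 + ∑ i ∈ Finset.univ.filter (fun i : Fin n => j ≤ (i:ℕ)),
              Function.update t j₀ s i * x i) = A x + s * x j₀ := by
          intro x
          have hmem : j₀ ∈ Finset.univ.filter (fun i : Fin n => j ≤ (i:ℕ)) := by
            simp [hj₀]
          rw [← Finset.add_sum_erase _ _ hmem, Function.update_self]
          have herase : (Finset.univ.filter (fun i : Fin n => j ≤ (i:ℕ))).erase j₀
              = Finset.univ.filter (fun i : Fin n => j+1 ≤ (i:ℕ)) := by
            ext i
            simp only [Finset.mem_erase, Finset.mem_filter, Finset.mem_univ, true_and]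
            constructor
            · rintro ⟨hne, hge⟩
              have : (i:ℕ) ≠ j := fun hc => hne (by ext; exact hc)
              omega
            · intro hge
              constructor
              · intro hc
                rw [hc] at hge
                simp [hj₀] at hge
              · omega
          rw [herase]
          have : ∑ i ∈ Finset.univ.filter (fun i : Fin n => j+1 ≤ (i:ℕ)),
              Function.update t j₀ s i * x i
              = ∑ i ∈ Finset.univ.filter (fun i : Fin n => j+1 ≤ (i:ℕ)), t i * x i := by
            refine Finset.sum_congr rfl (fun i hi => ?_)
            have : i ≠ j₀ := by
              simp only [Finset.mem_filter] at hi
              intro hc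
              rw [hc] at hi
              simp [hj₀] at hi
            rw [Function.update_of_ne this]
          rw [this, hA]
          ring
        have heq : (fun x : Fin n → ℝ => (∏ i, x i ^ α' i) *
            (1 + ∑ i ∈ Finset.univ.filter (fun i : Fin n => j ≤ (i:ℕ)),
              Function.update t j₀ s i * x i) ^ (N - ∑ i, α' i))
            = ∑ k ∈ Finset.range (M+1), s^k • w k := by
          funext x
          rw [hsplit x]
          rw [Finset.sum_apply]
          have : (A x + s * x j₀)^M = ∑ k ∈ Finset.range (M+1),
              (s * x j₀)^k * (A x)^(M-k) * (M.choose k : ℝ) := by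
            rw [add_comm (A x) (s * x j₀), add_pow]
          rw [← hM, this, Finset.mul_sum]
          refine Finset.sum_congr rfl (fun k _ => ?_)
          rw [hw]
          simp only [Pi.smul_apply, smul_eq_mul]
          ring
        rw [← heq]
        exact h0
      have hwk₀ := coeff_mem_span _ M w hvals k₀ hk₀M
      have hfinal := Submodule.smul_mem _ ((M.choose k₀ : ℝ))⁻¹ hwk₀
      have hchoose : (M.choose k₀ : ℝ) ≠ 0 := by
        exact_mod_cast (Nat.choose_pos hk₀M).ne'
      have heq2 : ((M.choose k₀ : ℝ))⁻¹ • w k₀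
          = fun x : Fin n → ℝ => (∏ i, x i ^ α i) *
            (1 + ∑ i ∈ Finset.univ.filter (fun i : Fin n => j+1 ≤ (i:ℕ)), t i * x i)
              ^ (N - ∑ i, α i) := by
        funext x
        simp only [Pi.smul_apply, smul_eq_mul, hw]
        have hprod : (∏ i, x i ^ α' i) * (x j₀)^k₀ = ∏ i, x i ^ α i := by
          have h5 : ∏ i, x i ^ α' i = ∏ i ∈ Finset.univ.erase j₀, x i ^ α i := by
            rw [← Finset.mul_prod_erase Finset.univ (fun i => x i ^ α' i) (Finset.mem_univ j₀)]
            rw [hα', Function.update_self, pow_zero, one_mul]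
            refine Finset.prod_congr rfl (fun i hi => ?_)
            rw [Function.update_of_ne (Finset.ne_of_mem_erase hi)]
          rw [h5]
          rw [← Finset.mul_prod_erase Finset.univ (fun i => x i ^ α i) (Finset.mem_univ j₀)]
          ring
        have hMk : M - k₀ = N - ∑ i, α i := by omega
        rw [← hprod, hMk, hA]
        field_simp
      rw [heq2] at hfinal
      exact hfinal
  have hres := main n le_rfl α (fun i hi => absurd i.isLt (not_lt.2 hi)) hdN (fun _ => 0)
  have hempty : Finset.univ.filter (fun i : Fin n => n ≤ (i:ℕ)) = ∅ := by
    apply Finset.filter_false_of_mem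
    intro i _
    exact not_le.2 i.isLt
  rw [hempty] at hres
  simp only [Finset.sum_empty, add_zero, one_pow, mul_one] at hres
  exact hres

end Chunk5

section Chunk6

open Finset

/-- monomial functions -/
def Mono (n : ℕ) : Set ((Fin n → ℝ) → ℝ) :=
  {g | ∃ α : Fin n → ℕ, g = fun x => ∏ i, x i ^ α i}

lemma one_mem_mono (n : ℕ) : (fun _ : Fin n → ℝ => (1:ℝ)) ∈ Mono n :=
  ⟨fun _ => 0, by funext x; simp⟩

lemma coord_mem_mono (n : ℕ) (i : Fin n) : (fun x : Fin n → ℝ => x i) ∈ Mono n := by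
  classical
  refine ⟨Pi.single i 1, ?_⟩
  funext x
  rw [eq_comm]
  have : ∀ k : Fin n, x k ^ (Pi.single i 1 : Fin n → ℕ) k = if k = i then x k else 1 := by
    intro k
    by_cases h : k = i
    · subst h; simp
    · simp [Pi.single_apply, h]
  rw [Finset.prod_congr rfl (fun k _ => this k), Finset.prod_ite_eq' Finset.univ i (fun k => x k)]
  simp

lemma mul_mem_monoSpan {n : ℕ} {p q : (Fin n → ℝ) → ℝ}
    (hp : p ∈ Submodule.span ℝ (Mono n)) (hq : q ∈ Submodule.span ℝ (Mono n)) :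
    p * q ∈ Submodule.span ℝ (Mono n) := by
  induction hp using Submodule.span_induction with
  | mem g hg =>
    induction hq using Submodule.span_induction with
    | mem g' hg' =>
      apply Submodule.subset_span
      obtain ⟨α, rfl⟩ := hg
      obtain ⟨β, rfl⟩ := hg'
      refine ⟨α + β, ?_⟩
      funext x
      simp only [Pi.mul_apply, Pi.add_apply, pow_add]
      rw [← Finset.prod_mul_distrib]
    | zero => rw [mul_zero]; exact Submodule.zero_mem _
    | add a b _ _ ha hb => rw [mul_add]; exact Submodule.add_mem _ ha hb
    | smul c a _ ha => rw [mul_smul_comm]; exact Submodule.smul_mem _ _ ha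
  | zero => rw [zero_mul]; exact Submodule.zero_mem _
  | add a b _ _ ha hb => rw [add_mul]; exact Submodule.add_mem _ ha hb
  | smul c a _ ha => rw [smul_mul_assoc]; exact Submodule.smul_mem _ _ ha

lemma affine_mem_monoSpan (n : ℕ) (a : Fin n → ℝ) (c : ℝ) :
    (fun x : Fin n → ℝ => c + ∑ i, a i * x i) ∈ Submodule.span ℝ (Mono n) := by
  have heq : (fun x : Fin n → ℝ => c + ∑ i, a i * x i)
      = c • (fun _ : Fin n → ℝ => (1:ℝ)) + ∑ i : Fin n, a i • (fun x : Fin n → ℝ => x i) := by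
    funext x
    simp only [Pi.add_apply, Pi.smul_apply, smul_eq_mul, Finset.sum_apply]
    simp [mul_comm, mul_one]
  rw [heq]
  refine Submodule.add_mem _ (Submodule.smul_mem _ _ (Submodule.subset_span (one_mem_mono n))) ?_
  exact Submodule.sum_mem _ (fun i _ =>
    Submodule.smul_mem _ _ (Submodule.subset_span (coord_mem_mono n i)))

lemma pow_mem_monoSpan (n : ℕ) (a : Fin n → ℝ) (c : ℝ) (N : ℕ) :
    (fun x : Fin n → ℝ => (c + ∑ i, a i * x i)^N) ∈ Submodule.span ℝ (Mono n) := by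
  induction N with
  | zero =>
    have : (fun x : Fin n → ℝ => (c + ∑ i, a i * x i)^0) = fun _ : Fin n → ℝ => (1:ℝ) := by
      funext x; rw [pow_zero]
    rw [this]
    exact Submodule.subset_span (one_mem_mono n)
  | succ N IH =>
    have : (fun x : Fin n → ℝ => (c + ∑ i, a i * x i)^(N+1))
        = (fun x : Fin n → ℝ => (c + ∑ i, a i * x i)^N) * (fun x => c + ∑ i, a i * x i) := by
      funext x
      rw [Pi.mul_apply, pow_succ]
    rw [this]
    exact mul_mem_monoSpan IH (affine_mem_monoSpan n a c)

lemma monoSpan_le_gensSpan (n : ℕ) :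
    Submodule.span ℝ (Mono n) ≤ Submodule.span ℝ (gens n) := by
  rw [Submodule.span_le]
  rintro g ⟨α, rfl⟩
  exact monomial_mem_span_gens n α

end Chunk6

section Chunk7

open Finset

theorem stmt_15' (n m : ℕ) (ρ : ℝ → ℝ) (hρ : ∀ x, ρ x = x ^ 2)
    (K : Set (Fin n → ℝ)) (hK : IsCompact K)
    (f : (Fin n → ℝ) → (Fin m → ℝ)) (hf : ContinuousOn f K) :
    ∀ ε > 0, ∃ g : (Fin n → ℝ) → (Fin m → ℝ),
      (∃ (A₀ : (Fin n → ℝ) →ᵃ[ℝ] (Fin (n+m+1) → ℝ))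
        (hidden : List ((Fin (n+m+1) → ℝ) →ᵃ[ℝ] (Fin (n+m+1) → ℝ)))
        (Aout : (Fin (n+m+1) → ℝ) →ᵃ[ℝ] (Fin m → ℝ)),
        ∀ x, g x = Aout (applyLayers ρ (n+m+1) hidden (fun i => ρ (A₀ x i))))
      ∧ ∀ x ∈ K, ‖f x - g x‖ ≤ ε := by
  have hρ' : ρ = sqf := funext (fun x => hρ x)
  subst hρ'
  intro ε hε
  haveI : CompactSpace K := isCompact_iff_compactSpace.mp hK
  classical
  set coordC : Fin n → C(K, ℝ) :=
    fun i => ⟨fun z => (z : Fin n → ℝ) i, (continuous_apply i).comp continuous_subtype_val⟩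
    with hcoordC
  set A : Subalgebra ℝ C(K, ℝ) := Algebra.adjoin ℝ (Set.range coordC) with hA
  have hsep : A.SeparatesPoints := by
    intro z w hzw
    have hne : (z : Fin n → ℝ) ≠ (w : Fin n → ℝ) := fun hc => hzw (Subtype.ext hc)
    obtain ⟨i, hi⟩ := Function.ne_iff.1 hne
    exact ⟨coordC i, ⟨coordC i, Algebra.subset_adjoin ⟨i, rfl⟩, rfl⟩, hi⟩
  have htop := ContinuousMap.subalgebra_topologicalClosure_eq_top_of_separatesPoints A hsep
  set fC : Fin m → C(K, ℝ) :=
    fun j => ⟨fun z => f z j, (continuous_apply j).comp hf.restrict⟩ with hfC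
  have hmemcl : ∀ j, fC j ∈ closure (A : Set C(K,ℝ)) := by
    intro j
    have h1 : fC j ∈ A.topologicalClosure := by rw [htop]; trivial
    exact h1
  have hq : ∀ j : Fin m, ∃ qj ∈ (A : Set C(K,ℝ)), dist (fC j) qj < ε/2 :=
    fun j => Metric.mem_closure_iff.1 (hmemcl j) (ε/2) (by linarith)
  choose q hqA hqd using hq
  have hPgen : ∀ qq : C(K,ℝ), qq ∈ A → ∃ P : (Fin n → ℝ) → ℝ, P ∈ Submodule.span ℝ (Mono n)
      ∧ ∀ z : K, qq z = P (z : Fin n → ℝ) := by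
    intro qq hqq
    induction hqq using Algebra.adjoin_induction with
    | mem g hg =>
      obtain ⟨i, rfl⟩ := hg
      exact ⟨fun v => v i, Submodule.subset_span (coord_mem_mono n i), fun z => rfl⟩
    | algebraMap r =>
      refine ⟨fun _ => r, ?_, fun z => rfl⟩
      have h1 := Submodule.smul_mem (Submodule.span ℝ (Mono n)) r
        (Submodule.subset_span (one_mem_mono n))
      have h2 : r • (fun _ : Fin n → ℝ => (1:ℝ)) = fun _ : Fin n → ℝ => r := by
        funext x; simp
      rw [h2] at h1
      exact h1
    | add a b _ _ ha hb =>
      obtain ⟨P₁, hP₁, hag₁⟩ := ha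
      obtain ⟨P₂, hP₂, hag₂⟩ := hb
      exact ⟨P₁ + P₂, Submodule.add_mem _ hP₁ hP₂,
        fun z => by rw [ContinuousMap.add_apply, hag₁ z, hag₂ z]; rfl⟩
    | mul a b _ _ ha hb =>
      obtain ⟨P₁, hP₁, hag₁⟩ := ha
      obtain ⟨P₂, hP₂, hag₂⟩ := hb
      exact ⟨P₁ * P₂, mul_mem_monoSpan hP₁ hP₂,
        fun z => by rw [ContinuousMap.mul_apply, hag₁ z, hag₂ z]; rfl⟩
  have hPex : ∀ j, ∃ P : (Fin n → ℝ) → ℝ, P ∈ Submodule.span ℝ (Mono n)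
      ∧ ∀ z : K, q j z = P (z : Fin n → ℝ) := fun j => hPgen (q j) (hqA j)
  choose P hPspan hPagree using hPex
  have hreach := reach_P hK P (fun j => monoSpan_le_gensSpan n (hPspan j))
  obtain ⟨s, hreal⟩ := hreach
  obtain ⟨A₀, hidden, D, hD⟩ := hreal.2 (ε/2) (by linarith)
  set projAcc : (Fin (n+m+1) → ℝ) →ᵃ[ℝ] (Fin m → ℝ) :=
    affOfLin (LinearMap.pi (fun j : Fin m => LinearMap.proj (accI n m j))) 0 with hprojAcc
  refine ⟨fun x => (projAcc.comp D) (applyLayers sqf (n+m+1) hidden (fun i => sqf (A₀ x i))),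
    ⟨A₀, hidden, projAcc.comp D, fun x => rfl⟩, ?_⟩
  intro x hx
  rw [pi_norm_le_iff_of_nonneg (le_of_lt hε)]
  intro j
  set st := applyLayers sqf (n+m+1) hidden (fun i => sqf (A₀ x i)) with hst
  have hcomp : |f x j - P j x| ≤ ε/2 := by
    have h1 : q j ⟨x, hx⟩ = P j (x : Fin n → ℝ) := hPagree j ⟨x, hx⟩
    have h2 : dist (fC j ⟨x,hx⟩) (q j ⟨x,hx⟩) ≤ dist (fC j) (q j) :=
      ContinuousMap.dist_apply_le_dist _
    rw [Real.dist_eq] at h2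
    have h3 : fC j ⟨x,hx⟩ = f x j := rfl
    rw [h3, h1] at h2
    exact h2.trans (le_of_lt (by linarith [hqd j]))
  have hnet : |P j x - (projAcc.comp D) st j| ≤ ε/2 := by
    have h4 := hD x hx
    have h5 := norm_le_pi_norm (D st - St n m P s x) (accI n m j)
    rw [← hst] at h4
    have h6 : ‖(D st - St n m P s x) (accI n m j)‖ ≤ ε/2 := h5.trans h4
    rw [Pi.sub_apply, Real.norm_eq_abs, St_accI] at h6
    have h7 : (projAcc.comp D) st j = D st (accI n m j) := by
      rw [AffineMap.comp_apply, hprojAcc, mkAff_apply]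
      simp [LinearMap.proj_apply]
    rw [h7, abs_sub_comm]
    exact h6
  rw [Pi.sub_apply, Real.norm_eq_abs]
  calc |f x j - (projAcc.comp D) st j|
      ≤ |f x j - P j x| + |P j x - (projAcc.comp D) st j| := abs_sub_le _ _ _
    _ ≤ ε/2 + ε/2 := add_le_add hcomp hnet
    _ = ε := by ring

end Chunk7

theorem stmt_15 (n m : ℕ) (ρ : ℝ → ℝ) (hρ : ∀ x, ρ x = x ^ 2)
    (K : Set (Fin n → ℝ)) (hK : IsCompact K)
    (f : (Fin n → ℝ) → (Fin m → ℝ)) (hf : ContinuousOn f K) :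
    ∀ ε > 0, ∃ g : (Fin n → ℝ) → (Fin m → ℝ),
      IsNetworkFun ρ n m (n + m + 1) g ∧ ∀ x ∈ K, ‖f x - g x‖ ≤ ε := by
  intro ε hε
  obtain ⟨g, hnet, hbound⟩ := stmt_15' n m ρ hρ K hK f hf ε hε
  exact ⟨g, hnet, hbound⟩

end NetAux
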